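/- With x⟨t⟩, y⟨t⟩ the formal Laurent series expansions of the coordinates of the general Weierstrass curve in the parameter t = -x/y, the holomorphic differential ω₁ = dx/(2y + μ₁x + μ₃) has expansion ω₁ = (1 + μ₁ t + (μ₂ + μ₁²)t² + (2μ₁μ₂ + 2μ₃ + μ₁³)t³ + ...) dt, with all coefficients in ℤ[μ₁,μ₂,μ₃,μ₄,μ₆]; i.e., (dx⟨t⟩/dt)/(2y⟨t⟩ + μ₁x⟨t⟩ + μ₃) ∈ 1 + t·ℤ[μ⃗][[t]]. -/

import Mathlib

noncomputable section

/-- The coefficient ring `ℤ[μ₁,μ₂,μ₃,μ₄,μ₆]`. -/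
abbrev CoefRing : Type := MvPolynomial (Fin 5) ℤ

def μ1 : CoefRing := MvPolynomial.X 0
def μ2 : CoefRing := MvPolynomial.X 1
def μ3 : CoefRing := MvPolynomial.X 2
def μ4 : CoefRing := MvPolynomial.X 3
def μ6 : CoefRing := MvPolynomial.X 4

open PowerSeries in
/-- The functional equation `s = (1 + μ₂s + μ₄s² + μ₆s³)t² + (μ₁s + μ₃s²)t`
satisfied by `s = 1/x` in the arithmetic parameter `t = -x/y` of the curve
`y² + (μ₁x+μ₃)y = x³ + μ₂x² + μ₄x + μ₆`. -/
def SFunEq (s : PowerSeries CoefRing) : Prop :=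
  s = (1 + C μ2 * s + C μ4 * s ^ 2 + C μ6 * s ^ 3) * X ^ 2
      + (C μ1 * s + C μ3 * s ^ 2) * X

/-- Embedding of power series into formal Laurent series. -/
abbrev toL : PowerSeries CoefRing →+* LaurentSeries CoefRing :=
  HahnSeries.ofPowerSeries ℤ CoefRing

/-- The Laurent series `t`. -/
def tL : LaurentSeries CoefRing := HahnSeries.single (1 : ℤ) (1 : CoefRing)

/-- Constant Laurent series. -/
abbrev CL : CoefRing →+* LaurentSeries CoefRing := HahnSeries.C

/-- `IsXY s x y` says: `s` is the canonical solution of the functional equation,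
`x = 1/s` (the expansion `x⟨t⟩` of the `x`-coordinate) and `y = -x/t`
(the expansion `y⟨t⟩` of the `y`-coordinate). -/
structure IsXY (s : PowerSeries CoefRing)
    (x y : LaurentSeries CoefRing) : Prop where
  s0 : PowerSeries.constantCoeff s = 0
  seq : SFunEq s
  hx : x * toL s = 1
  hy : y * tL = -x

open PowerSeries

section aux

variable (s : PowerSeries CoefRing)

def Dps (s : PowerSeries CoefRing) : PowerSeries CoefRing :=
  1 - (C μ2 + 2 * C μ4 * s + 3 * C μ6 * s ^ 2) * X ^ 2
    - (C μ1 + 2 * C μ3 * s) * X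

lemma constantCoeff_Dps : constantCoeff (Dps s) = 1 := by
  simp [Dps]

lemma Dps_eq : Dps s
    = 1 - (C μ2 + C 2 * C μ4 * s
        + C 3 * C μ6 * s ^ 2) * X ^ 2
      - (C μ1 + C 2 * C μ3 * s) * X := by
  simp only [Dps, map_ofNat]

lemma derivativeFun_X' : (X : CoefRing⟦X⟧).derivativeFun = 1 := derivative_X

lemma key (hs : SFunEq s) :
    s.derivativeFun * X * Dps s
      = 2 * s - (C μ1 * s + C μ3 * s ^ 2) * X := by
  have hs' : s = (1 + C μ2 * s + C μ4 * s ^ 2 + C μ6 * s ^ 3) * X ^ 2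
      + (C μ1 * s + C μ3 * s ^ 2) * X := hs
  have hd := congrArg derivativeFun hs'
  simp only [derivativeFun_mul, derivativeFun_add,
    (show ∀ r : CoefRing, (C r : CoefRing⟦X⟧).derivativeFun = 0 from fun _ => derivative_C),
    derivativeFun_one,
    pow_succ, pow_zero, one_mul, derivativeFun_X', smul_eq_mul] at hd
  rw [Dps]
  linear_combination X * hd - 2 * hs'

end aux

set_option maxHeartbeats 2000000 in
open PowerSeries in
/-- The expansion of `ω₁ = dx/(2y+μ₁x+μ₃)` in the arithmetic parameter `t`:
there is `w ∈ 1 + t·ℤ[μ⃗][[t]]` with `dx⟨t⟩/dt = w·(2y⟨t⟩+μ₁x⟨t⟩+μ₃)`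
(here `dx/dt = -s'·x²` since `x = 1/s`), and
`w = 1 + μ₁t + (μ₂+μ₁²)t² + (2μ₁μ₂+2μ₃+μ₁³)t³ + ⋯`. -/
theorem statement3 (s : PowerSeries CoefRing) (x y : LaurentSeries CoefRing)
    (h : IsXY s x y) :
    ∃ w : PowerSeries CoefRing,
      -(toL s.derivativeFun) * x ^ 2 = toL w * (2 * y + CL μ1 * x + CL μ3) ∧
      constantCoeff w = 1 ∧
      coeff 1 w = μ1 ∧
      coeff 2 w = μ2 + μ1 ^ 2 ∧
      coeff 3 w = 2 * μ1 * μ2 + 2 * μ3 + μ1 ^ 3 := by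
  obtain ⟨w, hw⟩ : ∃ w, Dps s * w = 1 :=
    ⟨(Dps s).invOfUnit 1, mul_invOfUnit _ 1 (by rw [constantCoeff_Dps, Units.val_one])⟩
  have hk := key s h.seq
  have hmainps : w * (C μ1 * s * X + C μ3 * s ^ 2 * X - 2 * s)
      = -(s.derivativeFun * X) := by
    linear_combination w * hk - (s.derivativeFun * X) * hw
  have main := congrArg toL hmainps
  simp only [map_mul, map_sub, map_neg, map_add, map_pow, map_ofNat,
    HahnSeries.ofPowerSeries_X, HahnSeries.ofPowerSeries_C] at main
  rw [show (HahnSeries.single (1:ℤ) (1:CoefRing)) = tL from rfl] at main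
  have hsne : toL s ≠ 0 := by
    intro e
    have := h.hx
    rw [e, mul_zero] at this
    exact one_ne_zero this.symm
  have htne : tL ≠ 0 := HahnSeries.single_ne_zero one_ne_zero
  -- coefficients of s
  have hs' : s = (1 + C μ2 * s + C μ4 * s ^ 2 + C μ6 * s ^ 3) * X ^ 2
      + (C μ1 * s + C μ3 * s ^ 2) * X := h.seq
  have hs1 : coeff 1 s = 0 := by
    have h1 := congrArg (coeff 1) hs'
    simp only [pow_succ, pow_zero, one_mul, coeff_mul,
      Finset.Nat.sum_antidiagonal_eq_sum_range_succ_mk, Finset.sum_range_succ,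
      Finset.sum_range_zero, map_add, coeff_one, coeff_C, coeff_X] at h1
    norm_num [h.s0] at h1
    exact h1
  have hs2 : coeff 2 s = 1 := by
    have h2 := congrArg (coeff 2) hs'
    simp only [pow_succ, pow_zero, one_mul, coeff_mul,
      Finset.Nat.sum_antidiagonal_eq_sum_range_succ_mk, Finset.sum_range_succ,
      Finset.sum_range_zero, map_add, coeff_one, coeff_C, coeff_X] at h2
    norm_num [h.s0, hs1] at h2
    exact h2
  -- coefficients of w
  have hwD := hw
  rw [Dps_eq] at hwD
  have hw0 : constantCoeff w = 1 := by
    have h0 := congrArg (coeff 0) hwD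
    simp only [pow_succ, pow_zero, one_mul, coeff_mul, map_sub, map_add, map_one,
      Finset.Nat.sum_antidiagonal_eq_sum_range_succ_mk, Finset.sum_range_succ,
      Finset.sum_range_zero, coeff_one, coeff_C, coeff_X] at h0
    norm_num [h.s0] at h0
    exact h0
  have hw1 : coeff 1 w = μ1 := by
    have h1 := congrArg (coeff 1) hwD
    simp only [pow_succ, pow_zero, one_mul, coeff_mul, map_sub, map_add, map_one,
      Finset.Nat.sum_antidiagonal_eq_sum_range_succ_mk, Finset.sum_range_succ,
      Finset.sum_range_zero, coeff_one, coeff_C, coeff_X] at h1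
    norm_num [h.s0, hs1, hw0] at h1
    linear_combination h1
  have hw2 : coeff 2 w = μ2 + μ1 ^ 2 := by
    have h2 := congrArg (coeff 2) hwD
    simp only [pow_succ, pow_zero, one_mul, coeff_mul, map_sub, map_add, map_one,
      Finset.Nat.sum_antidiagonal_eq_sum_range_succ_mk, Finset.sum_range_succ,
      Finset.sum_range_zero, coeff_one, coeff_C, coeff_X] at h2
    norm_num [h.s0, hs1, hs2, hw0, hw1] at h2
    linear_combination h2
  have hw3 : coeff 3 w = 2 * μ1 * μ2 + 2 * μ3 + μ1 ^ 3 := by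
    have h3 := congrArg (coeff 3) hwD
    simp only [pow_succ, pow_zero, one_mul, coeff_mul, map_sub, map_add, map_one,
      Finset.Nat.sum_antidiagonal_eq_sum_range_succ_mk, Finset.sum_range_succ,
      Finset.sum_range_zero, coeff_one, coeff_C, coeff_X] at h3
    norm_num [h.s0, hs1, hs2, hw0, hw1, hw2] at h3
    linear_combination h3
  refine ⟨w, ?_, hw0, hw1, hw2, hw3⟩
  apply mul_right_cancel₀ (mul_ne_zero (pow_ne_zero 2 hsne) htne)
  linear_combination (-(toL s.derivativeFun) * tL * (x * toL s + 1)
      - toL w * (CL μ1 * tL - 2) * toL s) * h.hx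
    + (-2 * toL w * (toL s) ^ 2) * h.hy - main
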